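/- Fix d ≥ 1 and let R_d ⊆ ℤ³ be the set of all triples of the form (a+d, a, a), (a+d, a+d, a), or (a, a+d, a) for a ∈ ℤ. Then R_d is preserved by the d-modular max operation max_d, but for every positive integer d' ≠ d, R_d is not preserved by max_{d'}. -/

import Mathlib

/-- The `d`-modular max: `max x y` if `x ≡ y (mod d)`, and `x` otherwise. -/
def maxd (d x y : ℤ) : ℤ := if x % d = y % d then max x y else x

/-- The ternary relation consisting of the triples `(a+d,a,a)`, `(a+d,a+d,a)`, `(a,a+d,a)`. -/
def Rd (d : ℤ) : Set (ℤ × ℤ × ℤ) :=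
  {t | ∃ a : ℤ, t = (a + d, a, a) ∨ t = (a + d, a + d, a) ∨ t = (a, a + d, a)}

lemma mem_Rd_iff (d x y z : ℤ) :
    ((x, y, z) : ℤ × ℤ × ℤ) ∈ Rd d ↔
      (x = z + d ∧ y = z) ∨ (x = z + d ∧ y = z + d) ∨ (x = z ∧ y = z + d) := by
  constructor
  · rintro ⟨a, h | h | h⟩ <;> simp only [Prod.mk.injEq] at h <;> omega
  · intro h
    exact ⟨z, by simp only [Prod.mk.injEq, and_true]; omega⟩

lemma tri {d a b : ℤ} (hd : 1 ≤ d) (h : a % d = b % d) :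
    a = b ∨ b + d ≤ a ∨ a + d ≤ b := by
  obtain ⟨k, hk⟩ := Int.modEq_iff_dvd.mp (h : a ≡ b [ZMOD d])
  rcases lt_trichotomy k 0 with h0 | h0 | h0
  · right; left; nlinarith
  · left; subst h0; omega
  · right; right; nlinarith

theorem stmt_8 (d : ℤ) (hd : 1 ≤ d) :
    (∀ t₁ ∈ Rd d, ∀ t₂ ∈ Rd d,
      (maxd d t₁.1 t₂.1, maxd d t₁.2.1 t₂.2.1, maxd d t₁.2.2 t₂.2.2) ∈ Rd d) ∧
    (∀ d' : ℤ, 0 < d' → d' ≠ d →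
      ∃ t₁ ∈ Rd d, ∃ t₂ ∈ Rd d,
        (maxd d' t₁.1 t₂.1, maxd d' t₁.2.1 t₂.2.1, maxd d' t₁.2.2 t₂.2.2) ∉ Rd d) := by
  constructor
  · rintro ⟨x1, y1, z1⟩ ht1 ⟨x2, y2, z2⟩ ht2
    rw [mem_Rd_iff] at ht1 ht2
    simp only [mem_Rd_iff]
    by_cases h : z1 % d = z2 % d
    · have htri := tri hd h
      rcases ht1 with ⟨h1, h2⟩ | ⟨h1, h2⟩ | ⟨h1, h2⟩ <;>
        rcases ht2 with ⟨h3, h4⟩ | ⟨h3, h4⟩ | ⟨h3, h4⟩ <;>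
        subst h1 h2 h3 h4 <;>
        simp only [maxd, Int.add_emod_right, h, if_true, max_def, and_true, true_and,
          or_true, true_or] <;>
        split_ifs <;> omega
    · rcases ht1 with ⟨h1, h2⟩ | ⟨h1, h2⟩ | ⟨h1, h2⟩ <;>
        rcases ht2 with ⟨h3, h4⟩ | ⟨h3, h4⟩ | ⟨h3, h4⟩ <;>
        subst h1 h2 h3 h4 <;>
        simp only [maxd, Int.add_emod_right, h, if_false, and_true, true_and, or_true,
          true_or]
  · intro d' hd' hne
    refine ⟨(d, 0, 0), ?_, (d', d + d', d'), ?_, ?_⟩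
    · rw [mem_Rd_iff]; omega
    · rw [mem_Rd_iff]; omega
    · by_cases hdd : d % d' = 0
      · have hdvd : d' ∣ d := Int.dvd_of_emod_eq_zero hdd
        have hle : d' ≤ d := Int.le_of_dvd (by omega) hdvd
        simp only [maxd, Int.emod_self, Int.zero_emod, Int.add_emod_right, hdd, if_true,
          mem_Rd_iff, max_def, and_true, true_and, or_true, true_or]
        split_ifs <;> omega
      · simp only [maxd, Int.emod_self, Int.zero_emod, Int.add_emod_right, hdd, mem_Rd_iff,
          max_def]
        split_ifs <;> omega
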